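/- Value-function version of the inheritance property. Assume: (P(a)) Ṽ is as given (nonempty and closed under pointwise convergence); (B(a)) for every v̄ ∈ Ṽ and every y' ∈ Y, the function (s, a) ↦ h_{y'}(s, a, v̄) belongs to F̃; (B(b)) for every f ∈ F̃, the function s ↦ min_{a ∈ 𝒜 s} f(s, a) belongs to Ṽ. Then the unique bounded fixed point v* of H satisfies v*(·, b) ∈ Ṽ for every b ∈ B. -/
import Mathlib


open Finset

/-- The belief simplex over the modulation space `M`. -/
abbrev Belief (M : Type) [Fintype M] : Type :=
  {b : M → ℝ // (∀ μ, 0 ≤ b μ) ∧ ∑ μ, b μ = 1}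

/-- A finite SEP-POMDP: feasible action sets, cost function, state transition
probabilities, modulation/observation probabilities, and a discount factor. -/
structure SEP (S Y M A : Type) [Fintype S] [Fintype Y] [Fintype M] [Fintype A] where
  act : S → Finset A
  act_ne : ∀ s, (act s).Nonempty
  c : S → Y → A → ℝ
  p : Y → S → A → S → ℝ
  p_nonneg : ∀ y' s a s', 0 ≤ p y' s a s'
  p_sum : ∀ y' s a, ∑ s', p y' s a s' = 1
  Q : M → Y → M → ℝ
  Q_nonneg : ∀ μ y' μ', 0 ≤ Q μ y' μ'
  Q_sum : ∀ μ, ∑ y', ∑ μ', Q μ y' μ' = 1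
  β : ℝ
  β_nonneg : 0 ≤ β
  β_lt_one : β < 1

namespace SEP

variable {S Y M A : Type} [Fintype S] [Fintype Y] [Fintype M] [Fintype A]

/-- `σ(y' | b) = ∑ μ, ∑ μ', b μ * Q μ y' μ'`. -/
def sig (P : SEP S Y M A) (b : Belief M) (y' : Y) : ℝ :=
  ∑ μ, ∑ μ', b.1 μ * P.Q μ y' μ'

/-- The Bayesian belief update `λ(y', b)`. -/
noncomputable def lam (P : SEP S Y M A) (y' : Y) (b : Belief M) : Belief M :=
  if h : 0 < P.sig b y' then
    ⟨fun μ' => (∑ μ, b.1 μ * P.Q μ y' μ') / P.sig b y',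
      fun μ' => div_nonneg (Finset.sum_nonneg fun μ _ =>
        mul_nonneg (b.2.1 μ) (P.Q_nonneg μ y' μ')) h.le,
      by
        rw [← Finset.sum_div, Finset.sum_comm]
        exact div_self (ne_of_gt h)⟩
  else b

/-- `h_{y'}(s, a, v̄) = c s y' a + β * ∑ s', p y' s a s' * v̄ s'`. -/
def hy (P : SEP S Y M A) (y' : Y) (s : S) (a : A) (vb : S → ℝ) : ℝ :=
  P.c s y' a + P.β * ∑ s', P.p y' s a s' * vb s'

/-- The Bellman operator `H` of the SEP-POMDP. -/
noncomputable def H (P : SEP S Y M A) (v : S → Belief M → ℝ) (s : S) (b : Belief M) : ℝ :=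
  (P.act s).inf' (P.act_ne s) fun a =>
    ∑ y', P.sig b y' * P.hy y' s a fun s' => v s' (P.lam y' b)

/-- Boundedness of a function `v : S × B → ℝ`. -/
def Bdd (v : S → Belief M → ℝ) : Prop :=
  ∃ C, ∀ s b, |v s b| ≤ C

end SEP


section Aux

open Finset Filter

variable {S Y M A : Type} [Fintype S] [Fintype Y] [Fintype M] [Fintype A]

lemma SEP.sig_nonneg (P : SEP S Y M A) (b : Belief M) (y' : Y) : 0 ≤ P.sig b y' :=
  Finset.sum_nonneg fun μ _ => Finset.sum_nonneg fun μ' _ =>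
    mul_nonneg (b.2.1 μ) (P.Q_nonneg μ y' μ')

lemma SEP.sig_sum (P : SEP S Y M A) (b : Belief M) : ∑ y', P.sig b y' = 1 := by
  unfold SEP.sig
  rw [Finset.sum_comm]
  have : ∀ μ, ∑ y', ∑ μ', b.1 μ * P.Q μ y' μ' = b.1 μ := by
    intro μ
    rw [show ∑ y', ∑ μ', b.1 μ * P.Q μ y' μ' = b.1 μ * ∑ y', ∑ μ', P.Q μ y' μ' by
      simp [Finset.mul_sum], P.Q_sum μ, mul_one]
  simp only [this]
  exact b.2.2

lemma abs_inf'_sub_inf'_le {A : Type} {t : Finset A} (ht : t.Nonempty) (f g : A → ℝ) (D : ℝ)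
    (h : ∀ a ∈ t, |f a - g a| ≤ D) : |t.inf' ht f - t.inf' ht g| ≤ D := by
  rw [abs_sub_le_iff]
  constructor
  · obtain ⟨a, ha, hag⟩ := t.exists_mem_eq_inf' ht g
    have h1 := t.inf'_le f ha
    have h2 := (abs_sub_le_iff.mp (h a ha)).1
    rw [hag]; linarith
  · obtain ⟨a, ha, haf⟩ := t.exists_mem_eq_inf' ht f
    have h1 := t.inf'_le g ha
    have h2 := (abs_sub_le_iff.mp (h a ha)).2
    rw [haf]; linarith

lemma SEP.contraction (P : SEP S Y M A) (v w : S → Belief M → ℝ) (D : ℝ)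
    (h : ∀ s b, |v s b - w s b| ≤ D) :
    ∀ s b, |P.H v s b - P.H w s b| ≤ P.β * D := by
  intro s b
  apply abs_inf'_sub_inf'_le
  intro a _
  rw [← Finset.sum_sub_distrib]
  have hterm : ∀ y' : Y,
      P.sig b y' * P.hy y' s a (fun s' => v s' (P.lam y' b)) -
        P.sig b y' * P.hy y' s a (fun s' => w s' (P.lam y' b)) =
      P.sig b y' * (P.β * ∑ s', P.p y' s a s' *
        (v s' (P.lam y' b) - w s' (P.lam y' b))) := by
    intro y'
    unfold SEP.hy
    simp only [mul_sub, Finset.sum_sub_distrib, Finset.mul_sum]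
    ring_nf
    simp only [Finset.mul_sum, mul_assoc, mul_comm, mul_left_comm]
  simp only [hterm]
  calc |∑ y', P.sig b y' * (P.β * ∑ s', P.p y' s a s' *
          (v s' (P.lam y' b) - w s' (P.lam y' b)))|
      ≤ ∑ y', |P.sig b y' * (P.β * ∑ s', P.p y' s a s' *
          (v s' (P.lam y' b) - w s' (P.lam y' b)))| := Finset.abs_sum_le_sum_abs _ _
    _ ≤ ∑ y', P.sig b y' * (P.β * D) := by
        apply Finset.sum_le_sum
        intro y' _
        rw [abs_mul, abs_of_nonneg (P.sig_nonneg b y'), abs_mul,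
          abs_of_nonneg P.β_nonneg]
        apply mul_le_mul_of_nonneg_left _ (P.sig_nonneg b y')
        apply mul_le_mul_of_nonneg_left _ P.β_nonneg
        calc |∑ s', P.p y' s a s' * (v s' (P.lam y' b) - w s' (P.lam y' b))|
            ≤ ∑ s', |P.p y' s a s' * (v s' (P.lam y' b) - w s' (P.lam y' b))| :=
              Finset.abs_sum_le_sum_abs _ _
          _ ≤ ∑ s', P.p y' s a s' * D := by
              apply Finset.sum_le_sum
              intro s' _
              rw [abs_mul, abs_of_nonneg (P.p_nonneg y' s a s')]
              exact mul_le_mul_of_nonneg_left (h s' (P.lam y' b)) (P.p_nonneg y' s a s')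
          _ = D := by rw [← Finset.sum_mul, P.p_sum, one_mul]
    _ = P.β * D := by rw [← Finset.sum_mul, P.sig_sum, one_mul]

end Aux

/-- **Value-function version of the inheritance property.** Under P(a), B(a)
and B(b) (with `Ft` a convex cone of structured functions on `S × A`), the
unique bounded fixed point `vstar` of `H` satisfies `vstar (·, b) ∈ Vt`
for every belief `b`. -/
theorem sep_pomdp_inheritance_value {S Y M A : Type} [Fintype S] [Fintype Y] [Fintype M] [Fintype A]
    [Nonempty S] [Nonempty Y] [Nonempty M] [Nonempty A]
    (P : SEP S Y M A)
    (Vt : Set (S → ℝ)) (hVne : Vt.Nonempty) (hVclosed : IsClosed Vt)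
    -- F̃ is a convex cone of functions on S × A
    (Ft : Set (S × A → ℝ))
    (hFadd : ∀ f ∈ Ft, ∀ g ∈ Ft, (fun x => f x + g x) ∈ Ft)
    (hFsmul : ∀ f ∈ Ft, ∀ t : ℝ, 0 ≤ t → (fun x => t * f x) ∈ Ft)
    -- B(a)
    (hBa : ∀ vb ∈ Vt, ∀ y' : Y, (fun x : S × A => P.hy y' x.1 x.2 vb) ∈ Ft)
    -- B(b)
    (hBb : ∀ f ∈ Ft,
      (fun s => (P.act s).inf' (P.act_ne s) fun a => f (s, a)) ∈ Vt)
    -- the unique bounded fixed point of H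
    (vstar : S → Belief M → ℝ) (hbdd : SEP.Bdd vstar)
    (hfix : ∀ s b, vstar s b = P.H vstar s b) :
    ∀ b, (fun s => vstar s b) ∈ Vt := by
  
  classical
  obtain ⟨w0, hw0⟩ := hVne
  set v0 : S → Belief M → ℝ := fun s _ => w0 s with hv0
  set vn : ℕ → S → Belief M → ℝ := fun n => (P.H)^[n] v0 with hvn
  -- zero function in Ft
  have hzero : (fun _ : S × A => (0 : ℝ)) ∈ Ft := by
    obtain ⟨y0⟩ := ‹Nonempty Y›
    have h0 := hFsmul _ (hBa w0 hw0 y0) 0 le_rfl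
    simpa using h0
  -- slices of iterates are in Vt
  have hslice : ∀ n, ∀ b, (fun s => vn n s b) ∈ Vt := by
    intro n
    induction n with
    | zero => intro b; simpa [hvn, hv0] using hw0
    | succ n ih =>
      intro b
      have hmem : (fun x : S × A => ∑ y', P.sig b y' *
          P.hy y' x.1 x.2 fun s' => vn n s' (P.lam y' b)) ∈ Ft := by
        have hsum : (∑ y' : Y, fun x : S × A => P.sig b y' * P.hy y' x.1 x.2
            fun s' => vn n s' (P.lam y' b)) ∈ Ft := by
          apply Finset.sum_induction
          · intro f g hf hg; exact hFadd f hf g hg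
          · exact hzero
          · intro y' _
            exact hFsmul _ (hBa _ (ih (P.lam y' b)) y') _ (P.sig_nonneg b y')
        have : (∑ y' : Y, fun x : S × A => P.sig b y' * P.hy y' x.1 x.2
            fun s' => vn n s' (P.lam y' b)) =
            fun x : S × A => ∑ y', P.sig b y' *
              P.hy y' x.1 x.2 fun s' => vn n s' (P.lam y' b) := by
          funext x
          simp [Finset.sum_apply]
        rwa [this] at hsum
      have hkey := hBb _ hmem
      have heq : (fun s => vn (n + 1) s b) =
          fun s => (P.act s).inf' (P.act_ne s) fun a =>
            (fun x : S × A => ∑ y', P.sig b y' *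
              P.hy y' x.1 x.2 fun s' => vn n s' (P.lam y' b)) (s, a) := by
        funext s
        simp only [hvn, Function.iterate_succ_apply']
        rfl
      rw [heq]
      exact hkey
  -- a uniform bound on the distance to vstar
  obtain ⟨Cs, hCs⟩ := hbdd
  have hS : (Finset.univ : Finset S).Nonempty := Finset.univ_nonempty
  set Cw : ℝ := Finset.univ.sup' hS (fun s => |w0 s|) with hCw
  set C : ℝ := Cw + Cs with hCdef
  have hbound : ∀ n s b, |vn n s b - vstar s b| ≤ P.β ^ n * C := by
    intro n
    induction n with
    | zero =>
      intro s b
      simp only [pow_zero, one_mul, hvn, Function.iterate_zero, id_eq]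
      calc |v0 s b - vstar s b| ≤ |v0 s b| + |vstar s b| := abs_sub _ _
        _ ≤ Cw + Cs := by
            apply add_le_add _ (hCs s b)
            exact Finset.le_sup' (fun s => |w0 s|) (Finset.mem_univ s)
    | succ n ih =>
      intro s b
      have h1 : vn (n + 1) s b = P.H (vn n) s b := by
        simp [hvn, Function.iterate_succ_apply']
      rw [h1, hfix s b]
      calc |P.H (vn n) s b - P.H vstar s b| ≤ P.β * (P.β ^ n * C) :=
            P.contraction (vn n) vstar (P.β ^ n * C) (fun s b => ih s b) s b
        _ = P.β ^ (n + 1) * C := by ring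
  -- pass to the limit
  intro b
  have hlim : Filter.Tendsto (fun n => fun s => vn n s b) Filter.atTop
      (nhds fun s => vstar s b) := by
    rw [tendsto_pi_nhds]
    intro s
    have h0 : Filter.Tendsto (fun n => vn n s b - vstar s b) Filter.atTop (nhds 0) := by
      apply squeeze_zero_norm (fun n => hbound n s b)
      simpa using (tendsto_pow_atTop_nhds_zero_of_lt_one P.β_nonneg
        P.β_lt_one).mul_const C
    have := h0.add_const (vstar s b)
    simpa using this
  exact hVclosed.mem_of_tendsto hlim (Filter.Eventually.of_forall fun n => hslice n b)
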